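/- Let X^1, …, X^{n+1} be chain complexes each equipped with data (ξ_i, η_i, h_i) satisfying η∘ξ = Id, d(h) = ξ∘η − Id, h∘ξ = 0, η∘h = 0, h∘h = 0, and let f^i : X^i → X^{i+1} be chain maps. Define the functional homology operation H_*(f^n, …, f^1) = η ∘ f^n ∘ h ∘ f^{n−1} ∘ h ∘ ⋯ ∘ h ∘ f^1 ∘ ξ. Then, working over 𝔽₂, the identity ∑_{i=1}^{n−1} H_*(f^n, …, f^{i+1}∘f^i, …, f^1) = ∑_{i=1}^{n−1} H_*(f^n, …, f^{i+1}) ∘ H_*(f^i, …, f^1) holds. -/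
import Mathlib


/-- The interleaved composite `f^{a+k-1} ∘ h ∘ f^{a+k-2} ∘ h ∘ ⋯ ∘ h ∘ f^a`
of the chain maps `f^i : X^i → X^{i+1}`, with a copy of the homotopy `h`
inserted at each intermediate complex `X^j` except those in the skip set `S`
(the functional homology operation `H_*(f^{b},…,f^{a})` has no `h` before the
first map, which corresponds to `a ∈ S`; skipping further `h`'s at `j ∈ S`
amounts to composing the consecutive maps `f^j ∘ f^{j-1}`). -/
def interComp {X : ℕ → Type} [∀ i, AddCommGroup (X i)] [∀ i, Module (ZMod 2) (X i)]
    (f : ∀ i, X i →ₗ[ZMod 2] X (i + 1)) (h : ∀ i, X i →ₗ[ZMod 2] X i)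
    (S : ℕ → Prop) [DecidablePred S] (a : ℕ) : ∀ k, X a →ₗ[ZMod 2] X (a + k)
  | 0 => LinearMap.id
  | (k + 1) =>
      f (a + k) ∘ₗ (if S (a + k) then LinearMap.id else h (a + k)) ∘ₗ
        interComp f h S a k

/-- Transport of a linear map along an equality of indices. -/
def castCod {X : ℕ → Type} [∀ i, AddCommGroup (X i)] [∀ i, Module (ZMod 2) (X i)]
    {M : Type} [AddCommGroup M] [Module (ZMod 2) M]
    {a b : ℕ} (e : a = b) (g : M →ₗ[ZMod 2] X a) : M →ₗ[ZMod 2] X b :=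
  e ▸ g

theorem add_self_zero' {M : Type*} [AddCommGroup M] [Module (ZMod 2) M] (x : M) :
    x + x = 0 := by
  rw [← two_smul (ZMod 2) x, show (2 : ZMod 2) = 0 by decide, zero_smul]

theorem char2_rearrange {M : Type*} [AddCommGroup M] [Module (ZMod 2) M] (A B C : M) :
    A + B = (A + C) + (C + B) := by
  rw [show (A + C) + (C + B) = A + B + (C + C) by abel, add_self_zero', add_zero]

theorem eq_of_add_eq_zero' {M : Type*} [AddCommGroup M] [Module (ZMod 2) M] {A B : M}
    (hAB : A + B = 0) : A = B := by
  have : A + (B + B) = (A + B) + B := by abel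
  rw [add_self_zero', hAB, zero_add, add_zero] at this
  exact this

theorem comp_sum' {M N P : Type} [AddCommGroup M] [AddCommGroup N] [AddCommGroup P]
    [Module (ZMod 2) M] [Module (ZMod 2) N] [Module (ZMod 2) P]
    {ι : Type*} (s : Finset ι) (q : N →ₗ[ZMod 2] P) (g : ι → (M →ₗ[ZMod 2] N)) :
    q ∘ₗ (∑ i ∈ s, g i) = ∑ i ∈ s, q ∘ₗ g i := by
  ext x; simp [LinearMap.sum_apply, map_sum]

theorem sum_comp' {M N P : Type} [AddCommGroup M] [AddCommGroup N] [AddCommGroup P]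
    [Module (ZMod 2) M] [Module (ZMod 2) N] [Module (ZMod 2) P]
    {ι : Type*} (s : Finset ι) (g : ι → (N →ₗ[ZMod 2] P)) (q : M →ₗ[ZMod 2] N) :
    (∑ i ∈ s, g i) ∘ₗ q = ∑ i ∈ s, g i ∘ₗ q := by
  ext x; simp [LinearMap.sum_apply]

section
variable {X Y : ℕ → Type} [∀ i, AddCommGroup (X i)] [∀ i, Module (ZMod 2) (X i)]
  [∀ i, AddCommGroup (Y i)] [∀ i, Module (ZMod 2) (Y i)]
  {M N : Type} [AddCommGroup M] [Module (ZMod 2) M] [AddCommGroup N] [Module (ZMod 2) N]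

theorem castCod_comp_right {a b : ℕ} (e : a = b) (g : M →ₗ[ZMod 2] X a) (p : N →ₗ[ZMod 2] M) :
    castCod (X := X) e g ∘ₗ p = castCod e (g ∘ₗ p) := by subst e; rfl

theorem castCod_comp_left {a b : ℕ} (F : ∀ i, X i →ₗ[ZMod 2] Y i) (e : a = b)
    (g : M →ₗ[ZMod 2] X a) :
    F b ∘ₗ castCod (X := X) e g = castCod (X := Y) e (F a ∘ₗ g) := by subst e; rfl

theorem castCod_add' {a b : ℕ} (e e' : a = b) (g g' : M →ₗ[ZMod 2] X a) :
    castCod (X := X) e g + castCod (X := X) e' g' = castCod e (g + g') := by subst e; rfl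

theorem castCod_castCod {a b c : ℕ} (e : a = b) (e' : b = c) (g : M →ₗ[ZMod 2] X a) :
    castCod (X := X) e' (castCod e g) = castCod (e.trans e') g := by subst e; subst e'; rfl

theorem castCod_reindex (φ : ℕ → ℕ) {a b : ℕ} (e : a = b) (g : M →ₗ[ZMod 2] X (φ a)) :
    castCod (X := fun i => X (φ i)) e g
      = castCod (X := X) (congrArg φ e) g := by subst e; rfl

theorem castCod_congr {a a' b : ℕ} (e : a = b) (e' : a' = b) (g : M →ₗ[ZMod 2] X a)
    (g' : M →ₗ[ZMod 2] X a') (ha : a = a') (hg : castCod (X := X) ha g = g') :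
    castCod (X := X) e g = castCod e' g' := by subst ha; subst e; exact hg

end

section
variable {X Xs : ℕ → Type} [∀ i, AddCommGroup (X i)] [∀ i, Module (ZMod 2) (X i)]
  [∀ i, AddCommGroup (Xs i)] [∀ i, Module (ZMod 2) (Xs i)]
  (f : ∀ i, X i →ₗ[ZMod 2] X (i + 1)) (h : ∀ i, X i →ₗ[ZMod 2] X i)
  (ξ : ∀ i, Xs i →ₗ[ZMod 2] X i) (η : ∀ i, X i →ₗ[ZMod 2] Xs i)
  {M N : Type} [AddCommGroup M] [Module (ZMod 2) M] [AddCommGroup N] [Module (ZMod 2) N]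

theorem interComp_congr (S T : ℕ → Prop) [DecidablePred S] [DecidablePred T] (a : ℕ)
    (k : ℕ) (hST : ∀ j, a ≤ j → j < a + k → (S j ↔ T j)) :
    interComp f h S a k = interComp f h T a k := by
  induction k with
  | zero => rfl
  | succ k ih =>
    show (f (a+k) ∘ₗ _ ∘ₗ _) = (f (a+k) ∘ₗ _ ∘ₗ _)
    rw [ih (fun j hj hj' => hST j hj (by omega))]
    congr 2
    by_cases hs : S (a + k)
    · rw [if_pos hs, if_pos ((hST _ (by omega) (by omega)).mp hs)]
    · rw [if_neg hs, if_neg (fun ht => hs ((hST _ (by omega) (by omega)).mpr ht))]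

theorem interComp_split (S : ℕ → Prop) [DecidablePred S] (a k₁ k₂ k : ℕ) (hk : k₁ + k₂ = k) :
    interComp f h S a k
      = castCod (show (a + k₁) + k₂ = a + k by omega) (interComp f h S (a + k₁) k₂)
          ∘ₗ interComp f h S a k₁ := by
  subst hk
  induction k₂ with
  | zero => rfl
  | succ l ih =>
    show (f (a + (k₁ + l)) ∘ₗ _ ∘ₗ interComp f h S a (k₁ + l)) = _
    rw [ih, castCod_comp_right,
      castCod_comp_left (fun i => if S i then LinearMap.id else h i),
      castCod_comp_left f, castCod_comp_right,
      castCod_reindex (· + 1)]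
    refine castCod_congr (X := X) (M := X a) _ _ _ _
      (show (a + k₁ + l) + 1 = (a + k₁) + (l + 1) by omega) ?_
    rfl

/-- The `j`-th boundary term of the interleaved composite. -/
def bdryTerm (S : ℕ → Prop) [DecidablePred S] (a k j : ℕ) : X a →ₗ[ZMod 2] X (a + k) :=
  if hj : j < k ∧ ¬ S (a + j) then
    castCod (show (a + j + 1) + (k - (j + 1)) = a + k by omega)
      (interComp f h S (a + j + 1) (k - (j + 1))) ∘ₗ
      f (a + j) ∘ₗ (ξ (a + j) ∘ₗ η (a + j) + LinearMap.id) ∘ₗ interComp f h S a j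
  else 0

theorem castCod_interComp_comp_congr (S : ℕ → Prop) [DecidablePred S] {b k₁ k₂ c : ℕ}
    (hk : k₁ = k₂) (r : M →ₗ[ZMod 2] X b) (e₁ : b + k₁ = c) (e₂ : b + k₂ = c) :
    castCod (X := X) e₁ (interComp f h S b k₁ ∘ₗ r)
      = castCod e₂ (interComp f h S b k₂ ∘ₗ r) := by subst hk; rfl

theorem bdryTerm_top (S : ℕ → Prop) [DecidablePred S] (a k : ℕ) :
    bdryTerm f h ξ η S a (k + 1) k
      = f (a + k) ∘ₗ
          (if S (a + k) then 0 else (ξ (a + k) ∘ₗ η (a + k) + LinearMap.id)) ∘ₗ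
          interComp f h S a k := by
  by_cases hS : S (a + k)
  · rw [bdryTerm, dif_neg (by tauto), if_pos hS]
    simp
  · rw [bdryTerm, dif_pos ⟨by omega, hS⟩, if_neg hS]
    have : castCod (X := X) (show (a + k + 1) + ((k+1) - (k + 1)) = a + (k+1) by omega)
        (interComp f h S (a + k + 1) ((k+1) - (k + 1)) ∘ₗ
          (f (a + k) ∘ₗ (ξ (a + k) ∘ₗ η (a + k) + LinearMap.id) ∘ₗ interComp f h S a k))
      = castCod (show (a + k + 1) + 0 = a + (k+1) by omega)
        (interComp f h S (a + k + 1) 0 ∘ₗ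
          (f (a + k) ∘ₗ (ξ (a + k) ∘ₗ η (a + k) + LinearMap.id) ∘ₗ interComp f h S a k)) :=
      castCod_interComp_comp_congr f h S (by omega) _ _ _
    rw [castCod_comp_right] at *
    rw [this]
    rfl

theorem bdryTerm_step (S : ℕ → Prop) [DecidablePred S] (a k j : ℕ) (hj : j < k) :
    f (a + k) ∘ₗ (if S (a + k) then LinearMap.id else h (a + k)) ∘ₗ bdryTerm f h ξ η S a k j
      = bdryTerm f h ξ η S a (k + 1) j := by
  by_cases hS : S (a + j)
  · rw [bdryTerm, bdryTerm, dif_neg (by tauto), dif_neg (by tauto)]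
    simp
  · rw [bdryTerm, bdryTerm, dif_pos ⟨hj, hS⟩, dif_pos ⟨by omega, hS⟩,
      castCod_comp_right, castCod_comp_right,
      castCod_comp_left (fun i => if S i then LinearMap.id else h i),
      castCod_comp_left f, castCod_reindex (· + 1)]
    exact castCod_interComp_comp_congr f h S (show (k - (j+1)) + 1 = (k+1) - (j+1) by omega) _ _ _


theorem interComp_boundary (d : ∀ i, X i →ₗ[ZMod 2] X i)
    (hf : ∀ i, f i ∘ₗ d i = d (i + 1) ∘ₗ f i)
    (hht : ∀ i, d i ∘ₗ h i + h i ∘ₗ d i = ξ i ∘ₗ η i + LinearMap.id)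
    (S : ℕ → Prop) [DecidablePred S] (a k : ℕ) :
    d (a + k) ∘ₗ interComp f h S a k + interComp f h S a k ∘ₗ d a
      = ∑ j ∈ Finset.range k, bdryTerm f h ξ η S a k j := by
  induction k with
  | zero =>
    show d a ∘ₗ LinearMap.id + LinearMap.id ∘ₗ d a = _
    rw [LinearMap.comp_id, LinearMap.id_comp, Finset.range_zero, Finset.sum_empty]
    exact add_self_zero' _
  | succ k ih =>
    rw [Finset.sum_range_succ]
    have e1 : d (a + (k+1)) ∘ₗ interComp f h S a (k+1) + interComp f h S a (k+1) ∘ₗ d a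
        = f (a + k) ∘ₗ
              (d (a + k) ∘ₗ (if S (a + k) then LinearMap.id else h (a + k))
                + (if S (a + k) then LinearMap.id else h (a + k)) ∘ₗ d (a + k)) ∘ₗ
              interComp f h S a k
          + f (a + k) ∘ₗ (if S (a + k) then LinearMap.id else h (a + k)) ∘ₗ
              (d (a + k) ∘ₗ interComp f h S a k + interComp f h S a k ∘ₗ d a) := by
      show d ((a + k) + 1) ∘ₗ (f (a + k) ∘ₗ _ ∘ₗ interComp f h S a k)
          + (f (a + k) ∘ₗ _ ∘ₗ interComp f h S a k) ∘ₗ d a = _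
      rw [← LinearMap.comp_assoc, ← hf (a + k)]
      simp only [LinearMap.add_comp, LinearMap.comp_add, LinearMap.comp_assoc]
      exact char2_rearrange _ _ _
    rw [e1, ih, comp_sum', comp_sum']
    have e2 : f (a + k) ∘ₗ
          (d (a + k) ∘ₗ (if S (a + k) then LinearMap.id else h (a + k))
            + (if S (a + k) then LinearMap.id else h (a + k)) ∘ₗ d (a + k)) ∘ₗ
          interComp f h S a k = bdryTerm f h ξ η S a (k+1) k := by
      rw [bdryTerm_top]
      by_cases hS : S (a + k)
      · rw [if_pos hS, if_pos hS, LinearMap.comp_id, LinearMap.id_comp, add_self_zero']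
      · rw [if_neg hS, if_neg hS, hht]
    rw [e2]
    have e3 : ∑ j ∈ Finset.range k,
          f (a + k) ∘ₗ (if S (a + k) then LinearMap.id else h (a + k)) ∘ₗ
            bdryTerm f h ξ η S a k j
        = ∑ j ∈ Finset.range k, bdryTerm f h ξ η S a (k+1) j :=
      Finset.sum_congr rfl fun j hj =>
        bdryTerm_step f h ξ η S a k j (Finset.mem_range.mp hj)
    rw [e3]
    exact add_comm _ _



theorem termwise (n i : ℕ) (hi : i + 1 < n) :
    (η (0 + n) ∘ₗ interComp f h (fun j => j = 0 ∨ j = i + 1) 0 n ∘ₗ ξ 0)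
      + castCod (X := Xs) (show (i + 1) + (n - (i + 1)) = 0 + n by omega)
          ((η ((i + 1) + (n - (i + 1))) ∘ₗ
              interComp f h (fun j => j = i + 1) (i + 1) (n - (i + 1)) ∘ₗ ξ (i + 1)) ∘ₗ
            castCod (X := Xs) (Nat.zero_add (i + 1))
              (η (0 + (i + 1)) ∘ₗ interComp f h (fun j => j = 0) 0 (i + 1) ∘ₗ ξ 0))
      = η (0 + n) ∘ₗ bdryTerm f h ξ η (fun j => j = 0) 0 n (i + 1) ∘ₗ ξ 0 := by
  rw [interComp_split f h (fun j => j = 0 ∨ j = i + 1) 0 (i+1) (n-(i+1)) n (by omega),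
    interComp_congr f h (fun j => j = 0 ∨ j = i + 1) (fun j => j = 0) 0 (i+1)
      (fun j hj hj' => by omega),
    interComp_congr f h (fun j => j = 0 ∨ j = i + 1) (fun j => j = i + 1) (0+(i+1)) (n-(i+1))
      (fun j hj hj' => by omega)]
  simp only [LinearMap.comp_assoc]
  -- normalize the L summand
  rw [castCod_comp_right, castCod_comp_left η]
  -- normalize the R summand
  rw [castCod_comp_left (X := Xs) (Y := X) ξ (Nat.zero_add (i + 1)),
    castCod_comp_left (fun b => interComp f h (fun j => j = i + 1) b (n - (i + 1)))
      (Nat.zero_add (i + 1)),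
    castCod_reindex (· + (n - (i + 1))),
    castCod_comp_left η, castCod_castCod]
  -- normalize the target
  simp only [bdryTerm]
  rw [dif_pos (show i + 1 < n ∧ ¬ ((0 : ℕ) + (i + 1) = 0) from ⟨hi, by omega⟩)]
  simp only [LinearMap.comp_assoc]
  rw [castCod_comp_right, castCod_comp_left η]
  -- combine the two summands
  rw [castCod_add']
  rw [← LinearMap.comp_add, ← LinearMap.comp_add]
  rw [show (interComp f h (fun j => j = 0) 0 (i + 1) ∘ₗ ξ 0)
        + ξ (0 + (i + 1)) ∘ₗ η (0 + (i + 1)) ∘ₗ interComp f h (fun j => j = 0) 0 (i + 1) ∘ₗ ξ 0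
      = (ξ (0 + (i + 1)) ∘ₗ η (0 + (i + 1)) + LinearMap.id) ∘ₗ
          interComp f h (fun j => j = 0) 0 (i + 1) ∘ₗ ξ 0 from by
    simp only [LinearMap.add_comp, LinearMap.comp_assoc, LinearMap.id_comp]
    exact (add_comm _ _)]
  rw [interComp_split f h (fun j => j = i + 1) (0 + (i + 1)) 1 (n - (i + 1 + 1)) (n - (i + 1))
      (by omega),
    interComp_congr f h (fun j => j = i + 1) (fun j => j = 0) (0 + (i + 1) + 1) (n - (i + 1 + 1))
      (fun j hj hj' => by omega),
    show interComp f h (fun j => j = i + 1) (0 + (i + 1)) 1 = f (0 + (i + 1)) from by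
      show f (0 + (i + 1) + 0) ∘ₗ
          (if ((0 : ℕ) + (i + 1) + 0 = i + 1) then LinearMap.id else h (0 + (i + 1) + 0)) ∘ₗ
            LinearMap.id = _
      rw [if_pos (by omega)]
      rfl]
  simp only [LinearMap.comp_assoc]
  rw [castCod_comp_right, castCod_comp_left η, castCod_castCod]



end

/-- For chain complexes `X^1, …, X^{n+1}` over `𝔽₂` (here indexed `X 0, …, X n`)
with quasi-inverse data `(ξ_i, η_i, h_i)` on each (satisfying `η∘ξ = Id`,
`dh + hd = ξ∘η − Id`, `h∘ξ = 0`, `η∘h = 0`, `h∘h = 0`) and chain maps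
`f^i : X^i → X^{i+1}`, the functional homology operations
`H_*(f^n,…,f^1) = η ∘ f^n ∘ h ∘ ⋯ ∘ h ∘ f^1 ∘ ξ` satisfy
`∑_{i=1}^{n-1} H_*(f^n, …, f^{i+1}∘f^i, …, f^1)
  = ∑_{i=1}^{n-1} H_*(f^n, …, f^{i+1}) ∘ H_*(f^i, …, f^1)`. -/
theorem stmt1 {X Xs : ℕ → Type}
    [∀ i, AddCommGroup (X i)] [∀ i, Module (ZMod 2) (X i)]
    [∀ i, AddCommGroup (Xs i)] [∀ i, Module (ZMod 2) (Xs i)]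
    (d : ∀ i, X i →ₗ[ZMod 2] X i)
    (ξ : ∀ i, Xs i →ₗ[ZMod 2] X i) (η : ∀ i, X i →ₗ[ZMod 2] Xs i)
    (h : ∀ i, X i →ₗ[ZMod 2] X i)
    (f : ∀ i, X i →ₗ[ZMod 2] X (i + 1))
    (hd : ∀ i, d i ∘ₗ d i = 0)
    (hf : ∀ i, f i ∘ₗ d i = d (i + 1) ∘ₗ f i)
    (hdξ : ∀ i, d i ∘ₗ ξ i = 0) (hηd : ∀ i, η i ∘ₗ d i = 0)
    (hηξ : ∀ i, η i ∘ₗ ξ i = LinearMap.id)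
    (hht : ∀ i, d i ∘ₗ h i + h i ∘ₗ d i = ξ i ∘ₗ η i + LinearMap.id)
    (hhξ : ∀ i, h i ∘ₗ ξ i = 0) (hηh : ∀ i, η i ∘ₗ h i = 0)
    (hhh : ∀ i, h i ∘ₗ h i = 0)
    (n : ℕ) (hn : 2 ≤ n) :
    ∑ i ∈ Finset.range (n - 1),
        (η (0 + n) ∘ₗ interComp f h (fun j => j = 0 ∨ j = i + 1) 0 n ∘ₗ ξ 0)
      = ∑ i ∈ (Finset.range (n - 1)).attach,
          castCod (X := Xs)
            (show ((i : ℕ) + 1) + (n - ((i : ℕ) + 1)) = 0 + n by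
              have := Finset.mem_range.mp i.2; omega)
            ((η (((i : ℕ) + 1) + (n - ((i : ℕ) + 1))) ∘ₗ
                interComp f h (fun j => j = (i : ℕ) + 1) ((i : ℕ) + 1)
                  (n - ((i : ℕ) + 1)) ∘ₗ ξ ((i : ℕ) + 1)) ∘ₗ
              castCod (X := Xs) (Nat.zero_add ((i : ℕ) + 1))
                (η (0 + ((i : ℕ) + 1)) ∘ₗ
                  interComp f h (fun j => j = 0) 0 ((i : ℕ) + 1) ∘ₗ ξ 0)) := by
  have hR : (∑ i ∈ (Finset.range (n - 1)).attach,
        castCod (X := Xs)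
          (show ((i : ℕ) + 1) + (n - ((i : ℕ) + 1)) = 0 + n by
            have := Finset.mem_range.mp i.2; omega)
          ((η (((i : ℕ) + 1) + (n - ((i : ℕ) + 1))) ∘ₗ
              interComp f h (fun j => j = (i : ℕ) + 1) ((i : ℕ) + 1)
                (n - ((i : ℕ) + 1)) ∘ₗ ξ ((i : ℕ) + 1)) ∘ₗ
            castCod (X := Xs) (Nat.zero_add ((i : ℕ) + 1))
              (η (0 + ((i : ℕ) + 1)) ∘ₗ
                interComp f h (fun j => j = 0) 0 ((i : ℕ) + 1) ∘ₗ ξ 0)))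
      = ∑ i ∈ Finset.range (n - 1),
          (if hi' : i < n - 1 then
            castCod (X := Xs)
              (show (i + 1) + (n - (i + 1)) = 0 + n by omega)
              ((η ((i + 1) + (n - (i + 1))) ∘ₗ
                  interComp f h (fun j => j = i + 1) (i + 1) (n - (i + 1)) ∘ₗ ξ (i + 1)) ∘ₗ
                castCod (X := Xs) (Nat.zero_add (i + 1))
                  (η (0 + (i + 1)) ∘ₗ
                    interComp f h (fun j => j = 0) 0 (i + 1) ∘ₗ ξ 0))
          else 0) := by
    rw [← Finset.sum_attach (Finset.range (n - 1))]
    refine Finset.sum_congr rfl fun x _ => ?_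
    rw [dif_pos (Finset.mem_range.mp x.2)]
  apply eq_of_add_eq_zero'
  rw [hR, ← Finset.sum_add_distrib]
  have hterm : ∀ x ∈ Finset.range (n - 1),
      ((η (0 + n) ∘ₗ interComp f h (fun j => j = 0 ∨ j = x + 1) 0 n ∘ₗ ξ 0)
        + (if hi' : x < n - 1 then
            castCod (X := Xs)
              (show (x + 1) + (n - (x + 1)) = 0 + n by omega)
              ((η ((x + 1) + (n - (x + 1))) ∘ₗ
                  interComp f h (fun j => j = x + 1) (x + 1) (n - (x + 1)) ∘ₗ ξ (x + 1)) ∘ₗ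
                castCod (X := Xs) (Nat.zero_add (x + 1))
                  (η (0 + (x + 1)) ∘ₗ
                    interComp f h (fun j => j = 0) 0 (x + 1) ∘ₗ ξ 0))
          else 0))
      = η (0 + n) ∘ₗ bdryTerm f h ξ η (fun j => j = 0) 0 n (x + 1) ∘ₗ ξ 0 := by
    intro x hx
    have hx' := Finset.mem_range.mp hx
    rw [dif_pos hx']
    exact termwise f h ξ η n x (by omega)
  rw [Finset.sum_congr rfl hterm]
  have h0 : (η (0 + n) ∘ₗ bdryTerm f h ξ η (fun j => j = 0) 0 n 0 ∘ₗ ξ 0) = 0 := by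
    rw [bdryTerm, dif_neg (by simp)]
    simp
  have hall : ∑ j ∈ Finset.range n,
        (η (0 + n) ∘ₗ bdryTerm f h ξ η (fun j => j = 0) 0 n j ∘ₗ ξ 0)
      = ∑ x ∈ Finset.range (n - 1),
          (η (0 + n) ∘ₗ bdryTerm f h ξ η (fun j => j = 0) 0 n (x + 1) ∘ₗ ξ 0) := by
    rw [show Finset.range n = Finset.range ((n - 1) + 1) by congr 1; omega,
      Finset.sum_range_succ', h0, add_zero]
  rw [← hall]
  have hb := interComp_boundary f h ξ η d hf hht (fun j => j = 0) 0 n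
  calc ∑ j ∈ Finset.range n, η (0 + n) ∘ₗ bdryTerm f h ξ η (fun j => j = 0) 0 n j ∘ₗ ξ 0
      = η (0 + n) ∘ₗ (∑ j ∈ Finset.range n, bdryTerm f h ξ η (fun j => j = 0) 0 n j) ∘ₗ ξ 0 := by
        rw [sum_comp', comp_sum']
    _ = η (0 + n) ∘ₗ (d (0 + n) ∘ₗ interComp f h (fun j => j = 0) 0 n
          + interComp f h (fun j => j = 0) 0 n ∘ₗ d 0) ∘ₗ ξ 0 := by rw [← hb]
    _ = 0 := by
        simp only [LinearMap.comp_add, LinearMap.add_comp, LinearMap.comp_assoc]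
        rw [hdξ 0, ← LinearMap.comp_assoc, hηd (0 + n)]
        simp
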